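/- arXiv:2204.06716 — 4 statements merged into one kernel-verified Lean document; each statement's English description precedes it below -/
import Mathlib

section
/- Let x, x*, â be differentiable curves with x(t), x*(t) ∈ ℝⁿ and â(t) ∈ ℝᵖ, let u, u*, ū be curves with values in ℝᵐ, let a ∈ ℝᵖ be a fixed vector, and let Γ ∈ ℝ^{p×p} be a symmetric positive-definite matrix. Suppose that for all t: (i) ẋ(t) = f(x(t)) + B(x(t))(u(t) + Y(x(t))a); (ii) ẋ*(t) = f(x*(t)) + B(x*(t))u*(t); (iii) u(t) = ū(t) − Y(x(t))â(t); and (iv) â̇(t) = Γ Y(x(t))ᵀ B(x(t))ᵀ ∇ₓV̄(x(t), x*(t)). Define V(t) = V̄(x(t), x*(t)) + ½ (â(t) − a)ᵀ Γ⁻¹ (â(t) − a). Then for all t, V̇(t) = ∇ₓV̄(x(t),x*(t))ᵀ (f(x(t)) + B(x(t))ū(t)) + ∇_{x*}V̄(x(t),x*(t))ᵀ (f(x*(t)) + B(x*(t))u*(t)). -/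
open Matrix

/-- Adaptive control of a control-affine system with matched
uncertainty `Y(x) a` (Proposition 1, vector-parameter version): along the
closed-loop trajectory, the augmented certificate
`V(t) = V̄(x(t), x*(t)) + ½‖â(t) − a‖²_{Γ⁻¹}` evolves exactly as `V̄` would
along the nominal dynamics driven by `ū`. -/
theorem adaptive_control_affine_lyapunov_rate
    {n m p : ℕ}
    (f : (Fin n → ℝ) → (Fin n → ℝ))
    (B : (Fin n → ℝ) → Matrix (Fin n) (Fin m) ℝ)
    (Y : (Fin n → ℝ) → Matrix (Fin m) (Fin p) ℝ)
    (hf : Continuous f) (hB : Continuous B) (hY : Continuous Y)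
    (Vbar : (Fin n → ℝ) → (Fin n → ℝ) → ℝ)
    (gradx gradxs : (Fin n → ℝ) → (Fin n → ℝ) → (Fin n → ℝ))
    -- `V̄` is (continuously) differentiable, with total derivative `DV` whose
    -- partial actions are given by the gradients `∇ₓV̄` and `∇ₓ*V̄`:
    (DV : (Fin n → ℝ) → (Fin n → ℝ) → ((Fin n → ℝ) × (Fin n → ℝ)) →L[ℝ] ℝ)
    (hDV : ∀ a b, HasFDerivAt (fun q : (Fin n → ℝ) × (Fin n → ℝ) => Vbar q.1 q.2)
      (DV a b) (a, b))
    (hDVcont : Continuous fun q : (Fin n → ℝ) × (Fin n → ℝ) => DV q.1 q.2)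
    (hDVx : ∀ a b v, DV a b (v, 0) = gradx a b ⬝ᵥ v)
    (hDVxs : ∀ a b w, DV a b (0, w) = gradxs a b ⬝ᵥ w)
    -- the curves and their derivatives:
    (x xs x' xs' : ℝ → Fin n → ℝ)
    (u us ubar : ℝ → Fin m → ℝ)
    (ahat ahat' : ℝ → Fin p → ℝ)
    (a : Fin p → ℝ)
    (Γ : Matrix (Fin p) (Fin p) ℝ) (hΓ : Γ.PosDef)
    (hx : ∀ t, HasDerivAt x (x' t) t)
    (hxs : ∀ t, HasDerivAt xs (xs' t) t)
    (hahat : ∀ t, HasDerivAt ahat (ahat' t) t)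
    -- (i) true dynamics with matched uncertainty:
    (hdyn : ∀ t, x' t = f (x t) + B (x t) *ᵥ (u t + Y (x t) *ᵥ a))
    -- (ii) nominal dynamics of the target pair:
    (hnom : ∀ t, xs' t = f (xs t) + B (xs t) *ᵥ us t)
    -- (iii) feedback law:
    (hu : ∀ t, u t = ubar t - Y (x t) *ᵥ ahat t)
    -- (iv) adaptation law:
    (hadapt : ∀ t, ahat' t = Γ *ᵥ ((Y (x t))ᵀ *ᵥ ((B (x t))ᵀ *ᵥ gradx (x t) (xs t))))
    -- the augmented certificate:
    (V : ℝ → ℝ)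
    (hV : V = fun t =>
      Vbar (x t) (xs t) + (1 / 2) * ((ahat t - a) ⬝ᵥ (Γ⁻¹ *ᵥ (ahat t - a)))) :
    ∀ t, HasDerivAt V
      (gradx (x t) (xs t) ⬝ᵥ (f (x t) + B (x t) *ᵥ ubar t)
        + gradxs (x t) (xs t) ⬝ᵥ (f (xs t) + B (xs t) *ᵥ us t)) t := by
  intro t
  have hdet : IsUnit Γ.det := isUnit_iff_ne_zero.mpr hΓ.det_pos.ne'
  have hinv : Γ⁻¹ * Γ = 1 := Matrix.nonsing_inv_mul Γ hdet
  have hinv' : Γ * Γ⁻¹ = 1 := Matrix.mul_nonsing_inv Γ hdet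
  have hsym : Γᵀ = Γ := by
    have h := hΓ.1
    simpa [Matrix.IsHermitian, Matrix.conjTranspose, Matrix.map, Matrix.transpose] using h
  -- componentwise derivatives of the error e = ahat - a
  have hei : ∀ i, HasDerivAt (fun s => ahat s i - a i) (ahat' t i) t := fun i =>
    ((hasDerivAt_pi.mp (hahat t)) i).sub_const _
  -- derivative of the quadratic form
  have hq : HasDerivAt (fun s => (ahat s - a) ⬝ᵥ (Γ⁻¹ *ᵥ (ahat s - a)))
      (ahat' t ⬝ᵥ (Γ⁻¹ *ᵥ (ahat t - a)) + (ahat t - a) ⬝ᵥ (Γ⁻¹ *ᵥ ahat' t)) t := by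
    simp only [dotProduct, Matrix.mulVec, Pi.sub_apply]
    rw [← Finset.sum_add_distrib]
    exact HasDerivAt.fun_sum fun i _ =>
      (hei i).mul (HasDerivAt.fun_sum fun j _ => ((hei j).const_mul _))
  -- derivative of the Vbar term via the chain rule
  have hc : HasDerivAt (fun s => (x s, xs s)) (x' t, xs' t) t := (hx t).prodMk (hxs t)
  have h1 : HasDerivAt (fun s => Vbar (x s) (xs s))
      (gradx (x t) (xs t) ⬝ᵥ x' t + gradxs (x t) (xs t) ⬝ᵥ xs' t) t := by
    have h := (hDV (x t) (xs t)).comp_hasDerivAt t hc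
    have hval : DV (x t) (xs t) (x' t, xs' t)
        = gradx (x t) (xs t) ⬝ᵥ x' t + gradxs (x t) (xs t) ⬝ᵥ xs' t := by
      have hsplit : (x' t, xs' t)
          = ((x' t, (0 : Fin n → ℝ)) + ((0 : Fin n → ℝ), xs' t)) := by
        simp [Prod.ext_iff]
      rw [hsplit, map_add, hDVx, hDVxs]
    rw [hval] at h
    exact h
  have hV' : HasDerivAt V
      (gradx (x t) (xs t) ⬝ᵥ x' t + gradxs (x t) (xs t) ⬝ᵥ xs' t
        + (1 / 2) * (ahat' t ⬝ᵥ (Γ⁻¹ *ᵥ (ahat t - a))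
            + (ahat t - a) ⬝ᵥ (Γ⁻¹ *ᵥ ahat' t))) t := by
    rw [hV]
    exact h1.add (hq.const_mul (1 / 2 : ℝ))
  convert hV' using 1
  -- algebra: the adaptation law cancels the uncertainty term
  set g := gradx (x t) (xs t) with hg
  set e : Fin p → ℝ := ahat t - a with he
  set M : Fin p → ℝ := (Y (x t))ᵀ *ᵥ ((B (x t))ᵀ *ᵥ g) with hM
  have hA : ahat' t ⬝ᵥ (Γ⁻¹ *ᵥ e) = M ⬝ᵥ e := by
    rw [hadapt, ← hg, ← hM, dotProduct_comm, Matrix.dotProduct_mulVec,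
      ← Matrix.mulVec_transpose, Matrix.mulVec_mulVec, hsym, hinv',
      Matrix.one_mulVec, dotProduct_comm]
  have hB' : e ⬝ᵥ (Γ⁻¹ *ᵥ ahat' t) = e ⬝ᵥ M := by
    rw [hadapt, ← hg, ← hM, Matrix.mulVec_mulVec, hinv, Matrix.one_mulVec]
  have hC : M ⬝ᵥ e = g ⬝ᵥ (B (x t) *ᵥ (Y (x t) *ᵥ e)) := by
    rw [hM, Matrix.mulVec_transpose, Matrix.mulVec_transpose,
      ← Matrix.dotProduct_mulVec, ← Matrix.dotProduct_mulVec]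
  have hx'e : x' t = f (x t) + B (x t) *ᵥ ubar t - B (x t) *ᵥ (Y (x t) *ᵥ e) := by
    rw [hdyn, hu, he]
    rw [Matrix.mulVec_sub]
    simp only [Matrix.mulVec_add, Matrix.mulVec_sub]
    abel
  rw [hx'e, hnom, hA, hB', hC, dotProduct_comm e M, hC]
  rw [dotProduct_sub]
  ring
end

section
/- Let x, x* be differentiable curves with x(t), x*(t) ∈ ℝⁿ, let Â be a differentiable matrix-valued curve with Â(t) ∈ ℝ^{m×p}, let u, u*, ū be curves with values in ℝᵐ, let A ∈ ℝ^{m×p} be a fixed matrix, and let Γ ∈ ℝ^{m×m} be a symmetric positive-definite matrix. Suppose that for all t: (i) ẋ(t) = f(x(t)) + B(x(t))(u(t) + A y(x(t))); (ii) ẋ*(t) = f(x*(t)) + B(x*(t))u*(t); (iii) u(t) = ū(t) − Â(t) y(x(t)); and (iv) Â̇(t) = Γ B(x(t))ᵀ ∇ₓV̄(x(t),x*(t)) y(x(t))ᵀ. Define V(t) = V̄(x(t), x*(t)) + ½ tr((Â(t) − A)ᵀ Γ⁻¹ (Â(t) − A)). Then for all t, V̇(t) = ∇ₓV̄(x(t),x*(t))ᵀ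 (f(x(t)) + B(x(t))ū(t)) + ∇_{x*}V̄(x(t),x*(t))ᵀ (f(x*(t)) + B(x*(t))u*(t)). -/
open Matrix

lemma trace_form_sum {m p : ℕ} (P : Matrix (Fin m) (Fin p) ℝ)
    (Q : Matrix (Fin m) (Fin m) ℝ) (R : Matrix (Fin m) (Fin p) ℝ) :
    trace (Pᵀ * Q * R) = ∑ j, ∑ k, ∑ i, P i j * Q i k * R k j := by
  simp [Matrix.trace, Matrix.mul_apply, Matrix.diag, Finset.sum_mul]

lemma aux_deriv {m p : ℕ} (t : ℝ) (P P' : ℝ → Matrix (Fin m) (Fin p) ℝ)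
    (Q : Matrix (Fin m) (Fin m) ℝ) (A : Matrix (Fin m) (Fin p) ℝ)
    (hP : ∀ i j, HasDerivAt (fun τ => P τ i j) (P' t i j) t) :
    HasDerivAt (fun τ => trace ((P τ - A)ᵀ * Q * (P τ - A)))
      (trace ((P' t)ᵀ * Q * (P t - A)) + trace ((P t - A)ᵀ * Q * P' t)) t := by
  have key : ∀ τ, trace ((P τ - A)ᵀ * Q * (P τ - A))
      = ∑ j, ∑ k, ∑ i, (P τ i j - A i j) * Q i k * (P τ k j - A k j) := by
    intro τ
    rw [trace_form_sum]
    simp [Matrix.sub_apply]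
  have target : trace ((P' t)ᵀ * Q * (P t - A)) + trace ((P t - A)ᵀ * Q * P' t)
      = ∑ j, ∑ k, ∑ i, (P' t i j * Q i k * (P t k j - A k j)
          + ((P t i j - A i j) * Q i k) * P' t k j) := by
    rw [trace_form_sum, trace_form_sum, ← Finset.sum_add_distrib]
    refine Finset.sum_congr rfl fun j _ => ?_
    rw [← Finset.sum_add_distrib]
    refine Finset.sum_congr rfl fun k _ => ?_
    rw [← Finset.sum_add_distrib]
    refine Finset.sum_congr rfl fun i _ => ?_
    simp [Matrix.sub_apply]
  rw [target]
  simp only [key]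
  apply HasDerivAt.fun_sum; intro j _
  apply HasDerivAt.fun_sum; intro k _
  apply HasDerivAt.fun_sum; intro i _
  have h1 := ((hP i j).sub_const (A i j)).mul_const (Q i k)
  have h2 := (hP k j).sub_const (A k j)
  exact h1.mul h2

lemma tr_vmv {m p : ℕ} (M : Matrix (Fin m) (Fin p) ℝ) (h : Fin m → ℝ) (w : Fin p → ℝ) :
    trace (Mᵀ * vecMulVec h w) = h ⬝ᵥ (M *ᵥ w) := by
  simp [Matrix.trace, Matrix.mul_apply, Matrix.diag, vecMulVec_apply,
    dotProduct, Matrix.mulVec, Finset.mul_sum]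
  rw [Finset.sum_comm]
  exact Finset.sum_congr rfl fun i _ => Finset.sum_congr rfl fun j _ => by ring

lemma inv_mul_vmv {m p : ℕ} {Γ : Matrix (Fin m) (Fin m) ℝ} (hΓ : Γ.PosDef)
    (v : Fin m → ℝ) (w : Fin p → ℝ) :
    Γ⁻¹ * vecMulVec (Γ *ᵥ v) w = vecMulVec v w := by
  ext i j
  simp only [Matrix.mul_apply, vecMulVec_apply]
  have : ∑ k, Γ⁻¹ i k * ((Γ *ᵥ v) k * w j) = (Γ⁻¹ *ᵥ (Γ *ᵥ v)) i * w j := by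
    simp [Matrix.mulVec, dotProduct, Finset.sum_mul, mul_assoc]
  rw [this, mulVec_mulVec, Matrix.nonsing_inv_mul _ hΓ.det_pos.ne'.isUnit, one_mulVec]

/-- Adaptive control of a control-affine system with matched
uncertainty `A y(x)` (Proposition 1, matrix-parameter version with parametric
features): along the closed-loop trajectory, the augmented certificate
`V(t) = V̄(x(t), x*(t)) + ½‖Â(t) − A‖²_{Γ⁻¹}` (squared weighted trace norm)
evolves exactly as `V̄` would along the nominal dynamics driven by `ū`. -/
theorem adaptive_control_affine_features_lyapunov_rate
    {n m p : ℕ}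
    (f : (Fin n → ℝ) → (Fin n → ℝ))
    (B : (Fin n → ℝ) → Matrix (Fin n) (Fin m) ℝ)
    (y : (Fin n → ℝ) → (Fin p → ℝ))
    (hf : Continuous f) (hB : Continuous B) (hy : Continuous y)
    (Vbar : (Fin n → ℝ) → (Fin n → ℝ) → ℝ)
    (gradx gradxs : (Fin n → ℝ) → (Fin n → ℝ) → (Fin n → ℝ))
    -- `V̄` is (continuously) differentiable, with total derivative `DV` whose
    -- partial actions are given by the gradients `∇ₓV̄` and `∇ₓ*V̄`:
    (DV : (Fin n → ℝ) → (Fin n → ℝ) → ((Fin n → ℝ) × (Fin n → ℝ)) →L[ℝ] ℝ)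
    (hDV : ∀ a b, HasFDerivAt (fun q : (Fin n → ℝ) × (Fin n → ℝ) => Vbar q.1 q.2)
      (DV a b) (a, b))
    (hDVcont : Continuous fun q : (Fin n → ℝ) × (Fin n → ℝ) => DV q.1 q.2)
    (hDVx : ∀ a b v, DV a b (v, 0) = gradx a b ⬝ᵥ v)
    (hDVxs : ∀ a b w, DV a b (0, w) = gradxs a b ⬝ᵥ w)
    -- the curves and their derivatives:
    (x xs x' xs' : ℝ → Fin n → ℝ)
    (u us ubar : ℝ → Fin m → ℝ)
    (Ahat Ahat' : ℝ → Matrix (Fin m) (Fin p) ℝ)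
    (A : Matrix (Fin m) (Fin p) ℝ)
    (Γ : Matrix (Fin m) (Fin m) ℝ) (hΓ : Γ.PosDef)
    (hx : ∀ t, HasDerivAt x (x' t) t)
    (hxs : ∀ t, HasDerivAt xs (xs' t) t)
    (hAhat : ∀ t i j, HasDerivAt (fun τ => Ahat τ i j) (Ahat' t i j) t)
    -- (i) true dynamics with matched uncertainty:
    (hdyn : ∀ t, x' t = f (x t) + B (x t) *ᵥ (u t + A *ᵥ y (x t)))
    -- (ii) nominal dynamics of the target pair:
    (hnom : ∀ t, xs' t = f (xs t) + B (xs t) *ᵥ us t)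
    -- (iii) feedback law:
    (hu : ∀ t, u t = ubar t - Ahat t *ᵥ y (x t))
    -- (iv) adaptation law `Â̇ = Γ B(x)ᵀ ∇ₓV̄ y(x)ᵀ`:
    (hadapt : ∀ t, Ahat' t =
      vecMulVec (Γ *ᵥ ((B (x t))ᵀ *ᵥ gradx (x t) (xs t))) (y (x t)))
    -- the augmented certificate with the squared weighted trace norm:
    (V : ℝ → ℝ)
    (hV : V = fun t =>
      Vbar (x t) (xs t) + (1 / 2) * Matrix.trace ((Ahat t - A)ᵀ * Γ⁻¹ * (Ahat t - A))) :
    ∀ t, HasDerivAt V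
      (gradx (x t) (xs t) ⬝ᵥ (f (x t) + B (x t) *ᵥ ubar t)
        + gradxs (x t) (xs t) ⬝ᵥ (f (xs t) + B (xs t) *ᵥ us t)) t := by
  intro t
  set g := gradx (x t) (xs t) with hg
  set gs := gradxs (x t) (xs t) with hgs
  set M := Ahat t - A with hM
  set E := Ahat' t with hE
  set yx := y (x t) with hyx
  -- derivative of the Vbar part
  have hcurve : HasDerivAt (fun τ => (x τ, xs τ)) (x' t, xs' t) t := (hx t).prodMk (hxs t)
  have hVbarD : HasDerivAt (fun τ => Vbar (x τ) (xs τ))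
      (DV (x t) (xs t) (x' t, xs' t)) t :=
    by have h := (hDV (x t) (xs t)).comp_hasDerivAt t hcurve; exact h
  have hsplit : DV (x t) (xs t) (x' t, xs' t) = g ⬝ᵥ x' t + gs ⬝ᵥ xs' t := by
    have hpair : ((x' t, xs' t) : (Fin n → ℝ) × (Fin n → ℝ))
        = (x' t, 0) + (0, xs' t) := by simp
    rw [hpair, map_add, hDVx, hDVxs]
  -- derivative of the trace part
  have hW : HasDerivAt (fun τ => trace ((Ahat τ - A)ᵀ * Γ⁻¹ * (Ahat τ - A)))
      (trace (Eᵀ * Γ⁻¹ * M) + trace (Mᵀ * Γ⁻¹ * E)) t :=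
    aux_deriv t Ahat Ahat' Γ⁻¹ A (fun i j => hAhat t i j)
  -- compute the trace terms
  have hΓinv_symm : (Γ⁻¹)ᵀ = Γ⁻¹ := by
    have := hΓ.inv.1.eq
    simpa [Matrix.IsHermitian, Matrix.conjTranspose_eq_transpose_of_trivial] using this
  have htr2 : trace (Mᵀ * Γ⁻¹ * E) = g ⬝ᵥ (B (x t) *ᵥ (M *ᵥ yx)) := by
    rw [hE, hadapt t, ← hg, ← hyx, Matrix.mul_assoc, inv_mul_vmv hΓ, tr_vmv,
      mulVec_transpose, ← dotProduct_mulVec]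
  have htr1 : trace (Eᵀ * Γ⁻¹ * M) = trace (Mᵀ * Γ⁻¹ * E) := by
    rw [← Matrix.trace_transpose (Eᵀ * Γ⁻¹ * M)]
    rw [Matrix.transpose_mul, Matrix.transpose_mul, transpose_transpose,
      hΓinv_symm, Matrix.mul_assoc]
  -- the closed-loop drift term
  have hxdot : g ⬝ᵥ x' t
      = g ⬝ᵥ (f (x t) + B (x t) *ᵥ ubar t) - g ⬝ᵥ (B (x t) *ᵥ (M *ᵥ yx)) := by
    rw [hdyn t, hu t]
    have : ubar t - Ahat t *ᵥ y (x t) + A *ᵥ y (x t) = ubar t - M *ᵥ yx := by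
      rw [hM, Matrix.sub_mulVec, hyx]
      abel
    rw [this, Matrix.mulVec_sub]
    simp [dotProduct_add, dotProduct_sub, mulVec_add]
    abel
  -- assemble
  rw [hV]
  have hfinal := hVbarD.add (hW.const_mul (1 / 2 : ℝ))
  have : DV (x t) (xs t) (x' t, xs' t)
      + (1 / 2 : ℝ) * (trace (Eᵀ * Γ⁻¹ * M) + trace (Mᵀ * Γ⁻¹ * E))
      = g ⬝ᵥ (f (x t) + B (x t) *ᵥ ubar t) + gs ⬝ᵥ (f (xs t) + B (xs t) *ᵥ us t) := by
    rw [hsplit, htr1, htr2, hxdot, hnom t]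
    ring
  rw [← this]
  exact hfinal
end

section
/- Let q : ℝ → ℝ^d be twice differentiable and q* : ℝ → ℝ^d be twice differentiable, and define q̃ = q − q*, s = q̇̃ + Λq̃, v = q̇* − Λq̃, where Λ ∈ ℝ^{d×d} is positive definite. Let H : ℝ → ℝ^{d×d} be a differentiable matrix-valued curve with H(t) symmetric positive definite for all t, let C : ℝ → ℝ^{d×d}, g : ℝ → ℝ^d, f_ext : ℝ → ℝ^d, Y : ℝ → ℝ^{d×p} be curves, let a ∈ ℝᵖ be fixed, and let â : ℝ → ℝᵖ be differentiable. Let K ∈ ℝ^{d×d} be positive definite and Γ ∈ ℝ^{p×p} be symmetric positive definite. Assume that for all t: (i) Ḣ(t) − 2C(t) is skew-symmetric; (ii) H(t)v̇(t) + C(t)v(t) + g(t) − f_ext(t) = Y(t)a (linear parameterization); (iii) H(t)q̈(t) + C(t)q̇(t) + g(t) = τ(t) + f_ext(t) with the generalized force τ(t) = Y(t)â(t) − K s(t); and (iv) â̇(t) = −Γ Y(t)ᵀ s(t). Then for all t, d/dt [ ½ s(t)ᵀ H(t) s(t) + ½ (â(t) − a)ᵀ Γ⁻¹ (â(t) − a)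 ] = − s(t)ᵀ K s(t). -/
open Matrix
lemma dot_hasDerivAt {n : ℕ} {u w : ℝ → Fin n → ℝ} {u' w' : Fin n → ℝ} {t : ℝ}
    (hu : ∀ i, HasDerivAt (fun x => u x i) (u' i) t)
    (hw : ∀ i, HasDerivAt (fun x => w x i) (w' i) t) :
    HasDerivAt (fun x => u x ⬝ᵥ w x) (u' ⬝ᵥ w t + u t ⬝ᵥ w') t := by
  simp only [dotProduct, ← Finset.sum_add_distrib]
  exact HasDerivAt.fun_sum fun i _ => (hu i).mul (hw i)

lemma mulVec_hasDerivAt {n m : ℕ} {M : ℝ → Matrix (Fin n) (Fin m) ℝ}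
    {M' : Matrix (Fin n) (Fin m) ℝ} {w : ℝ → Fin m → ℝ} {w' : Fin m → ℝ} {t : ℝ}
    (hM : ∀ i j, HasDerivAt (fun x => M x i j) (M' i j) t)
    (hw : ∀ j, HasDerivAt (fun x => w x j) (w' j) t) (i : Fin n) :
    HasDerivAt (fun x => (M x *ᵥ w x) i) ((M' *ᵥ w t + M t *ᵥ w') i) t := by
  simp only [mulVec, dotProduct, Pi.add_apply, ← Finset.sum_add_distrib]
  exact HasDerivAt.fun_sum fun j _ => (hM i j).mul (hw j)

lemma skew_quad {n : ℕ} {A : Matrix (Fin n) (Fin n) ℝ} (h : Aᵀ = -A) (x : Fin n → ℝ) :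
    x ⬝ᵥ (A *ᵥ x) = 0 := by
  have h1 : x ⬝ᵥ (A *ᵥ x) = (Aᵀ *ᵥ x) ⬝ᵥ x := by
    rw [Matrix.dotProduct_mulVec, ← Matrix.mulVec_transpose]
  rw [h, Matrix.neg_mulVec, neg_dotProduct] at h1
  have h2 : (A *ᵥ x) ⬝ᵥ x = x ⬝ᵥ (A *ᵥ x) := dotProduct_comm _ _
  linarith

lemma symm_dot {n : ℕ} {A : Matrix (Fin n) (Fin n) ℝ} (h : Aᵀ = A) (x y : Fin n → ℝ) :
    x ⬝ᵥ (A *ᵥ y) = y ⬝ᵥ (A *ᵥ x) := by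
  rw [Matrix.dotProduct_mulVec, ← Matrix.mulVec_transpose, h, dotProduct_comm]


/-- Slotine–Li adaptive control of a fully-actuated Lagrangian
system with linearly parameterized dynamics, stated along a trajectory: the
Lyapunov candidate `V = ½ sᵀHs + ½‖â − a‖²_{Γ⁻¹}` satisfies `V̇ = −sᵀKs`. -/
theorem slotine_li_lyapunov_rate
    {d p : ℕ}
    -- twice-differentiable trajectory `q` and target `q*`:
    (q qs q' qs' q'' qs'' : ℝ → Fin d → ℝ)
    (hq : ∀ t, HasDerivAt q (q' t) t) (hq' : ∀ t, HasDerivAt q' (q'' t) t)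
    (hqs : ∀ t, HasDerivAt qs (qs' t) t) (hqs' : ∀ t, HasDerivAt qs' (qs'' t) t)
    -- gains:
    (Λ K : Matrix (Fin d) (Fin d) ℝ) (hΛ : Λ.PosDef) (hK : K.PosDef)
    (Γ : Matrix (Fin p) (Fin p) ℝ) (hΓ : Γ.PosDef)
    -- auxiliary variables `q̃ = q − q*`, `s = q̇̃ + Λq̃`, `v = q̇* − Λq̃` and
    -- their derivatives:
    (qt s v v' : ℝ → Fin d → ℝ)
    (hqt : ∀ t, qt t = q t - qs t)
    (hs : ∀ t, s t = (q' t - qs' t) + Λ *ᵥ qt t)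
    (hv : ∀ t, v t = qs' t - Λ *ᵥ qt t)
    (hv' : ∀ t, v' t = qs'' t - Λ *ᵥ (q' t - qs' t))
    -- the dynamics terms evaluated along the trajectory, regarded as curves;
    -- `H` is differentiable with derivative `H'` and pointwise symmetric
    -- positive definite:
    (H H' C : ℝ → Matrix (Fin d) (Fin d) ℝ)
    (hH : ∀ t i j, HasDerivAt (fun τ => H τ i j) (H' t i j) t)
    (hHpd : ∀ t, (H t).PosDef)
    (g fext : ℝ → Fin d → ℝ) (Y : ℝ → Matrix (Fin d) (Fin p) ℝ)
    (a : Fin p → ℝ) (ahat ahat' : ℝ → Fin p → ℝ)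
    (hahat : ∀ t, HasDerivAt ahat (ahat' t) t)
    (τ : ℝ → Fin d → ℝ)
    -- (i) `Ḣ − 2C` is skew-symmetric:
    (hskew : ∀ t, (H' t - (2 : ℝ) • C t)ᵀ = -(H' t - (2 : ℝ) • C t))
    -- (ii) linear parameterization:
    (hlin : ∀ t, H t *ᵥ v' t + C t *ᵥ v t + g t - fext t = Y t *ᵥ a)
    -- (iii) equations of motion with the commanded generalized force:
    (hτ : ∀ t, τ t = Y t *ᵥ ahat t - K *ᵥ s t)
    (hdyn : ∀ t, H t *ᵥ q'' t + C t *ᵥ q' t + g t = τ t + fext t)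
    -- (iv) adaptation law:
    (hadapt : ∀ t, ahat' t = -(Γ *ᵥ ((Y t)ᵀ *ᵥ s t))) :
    ∀ t, HasDerivAt
      (fun t => (1 / 2) * (s t ⬝ᵥ (H t *ᵥ s t))
        + (1 / 2) * ((ahat t - a) ⬝ᵥ (Γ⁻¹ *ᵥ (ahat t - a))))
      (-(s t ⬝ᵥ (K *ᵥ s t))) t := by
  intro t
  set s' : ℝ → Fin d → ℝ := fun u => (q'' u - qs'' u) + Λ *ᵥ (q' u - qs' u) with hs'def
  -- componentwise derivatives of s
  have hsc : ∀ i, HasDerivAt (fun u => s u i) (s' t i) t := by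
    intro i
    have he : (fun u => s u i)
        = fun u => (q' u i - qs' u i) + ∑ j, Λ i j * (q u j - qs u j) := by
      funext u; rw [hs u, hqt u]
      simp [mulVec, dotProduct, mul_sub]
    have he' : s' t i = (q'' t i - qs'' t i) + ∑ j, Λ i j * (q' t j - qs' t j) := by
      simp [hs'def, mulVec, dotProduct]
    rw [he, he']
    exact (((hasDerivAt_pi.1 (hq' t)) i).sub ((hasDerivAt_pi.1 (hqs' t)) i)).add
      (HasDerivAt.fun_sum fun j _ => (((hasDerivAt_pi.1 (hq t)) j).sub
        ((hasDerivAt_pi.1 (hqs t)) j)).const_mul (Λ i j))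
  have hHs : ∀ i, HasDerivAt (fun u => (H u *ᵥ s u) i)
      ((H' t *ᵥ s t + H t *ᵥ s' t) i) t :=
    mulVec_hasDerivAt (fun i j => hH t i j) hsc
  have h1 : HasDerivAt (fun u => s u ⬝ᵥ (H u *ᵥ s u))
      (s' t ⬝ᵥ (H t *ᵥ s t) + s t ⬝ᵥ (H' t *ᵥ s t + H t *ᵥ s' t)) t :=
    dot_hasDerivAt hsc hHs
  have hac : ∀ i, HasDerivAt (fun u => (ahat u - a) i) (ahat' t i) t := by
    intro i
    simpa using ((hasDerivAt_pi.1 (hahat t)) i).sub_const (a i)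
  have hGc : ∀ i, HasDerivAt (fun u => (Γ⁻¹ *ᵥ (ahat u - a)) i)
      ((Γ⁻¹ *ᵥ ahat' t) i) t := by
    intro i
    have := mulVec_hasDerivAt (M := fun _ => Γ⁻¹) (M' := 0)
      (fun i j => hasDerivAt_const t _) hac i
    simpa using this
  have h2 : HasDerivAt (fun u => (ahat u - a) ⬝ᵥ (Γ⁻¹ *ᵥ (ahat u - a)))
      (ahat' t ⬝ᵥ (Γ⁻¹ *ᵥ (ahat t - a)) + (ahat t - a) ⬝ᵥ (Γ⁻¹ *ᵥ ahat' t)) t :=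
    dot_hasDerivAt hac hGc
  have hV := (h1.const_mul ((1:ℝ)/2)).add (h2.const_mul ((1:ℝ)/2))
  -- algebra: the derivative value equals -sᵀKs
  have key : H t *ᵥ s' t = Y t *ᵥ (ahat t - a) - K *ᵥ s t - C t *ᵥ s t := by
    have hsv : s t = q' t - v t := by rw [hv t, hs t]; abel
    have hsd : s' t = q'' t - v' t := by rw [hs'def, hv' t]; abel
    rw [hsd]
    simp only [Matrix.mulVec_sub]
    have e1 := hdyn t; rw [hτ t] at e1
    have e2 := hlin t
    have e3 : C t *ᵥ s t = C t *ᵥ q' t - C t *ᵥ v t := by rw [hsv, Matrix.mulVec_sub]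
    funext i
    have f1 := congrFun e1 i
    have f2 := congrFun e2 i
    have f3 := congrFun e3 i
    simp only [Pi.add_apply, Pi.sub_apply] at f1 f2 f3 ⊢
    linarith
  have hHsym : (H t)ᵀ = H t := by
    have h := (hHpd t).isHermitian
    simpa [Matrix.IsHermitian] using h
  have swap1 : s' t ⬝ᵥ (H t *ᵥ s t) = s t ⬝ᵥ (H t *ᵥ s' t) := symm_dot hHsym _ _
  have hskew0 : s t ⬝ᵥ (H' t *ᵥ s t) = 2 * (s t ⬝ᵥ (C t *ᵥ s t)) := by
    have h0 := skew_quad (hskew t) (s t)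
    have h1' : s t ⬝ᵥ ((H' t - (2:ℝ) • C t) *ᵥ s t)
        = s t ⬝ᵥ (H' t *ᵥ s t) - 2 * (s t ⬝ᵥ (C t *ᵥ s t)) := by
      rw [Matrix.sub_mulVec, dotProduct_sub, Matrix.smul_mulVec,
        dotProduct_smul, smul_eq_mul]
    linarith
  have hΓsym : (Γ⁻¹)ᵀ = Γ⁻¹ := by
    have h := hΓ.isHermitian.inv
    simpa [Matrix.IsHermitian] using h
  have swap2 : ahat' t ⬝ᵥ (Γ⁻¹ *ᵥ (ahat t - a)) = (ahat t - a) ⬝ᵥ (Γ⁻¹ *ᵥ ahat' t) :=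
    symm_dot hΓsym _ _
  have hGinv : Γ⁻¹ *ᵥ ahat' t = -((Y t)ᵀ *ᵥ s t) := by
    rw [hadapt t, Matrix.mulVec_neg, Matrix.mulVec_mulVec,
      Matrix.nonsing_inv_mul Γ (isUnit_iff_ne_zero.2 hΓ.det_pos.ne'), Matrix.one_mulVec]
  have hY : (ahat t - a) ⬝ᵥ ((Y t)ᵀ *ᵥ s t) = s t ⬝ᵥ (Y t *ᵥ (ahat t - a)) := by
    rw [Matrix.dotProduct_mulVec, Matrix.vecMul_transpose, dotProduct_comm]
  have hD : (1:ℝ)/2 * (s' t ⬝ᵥ (H t *ᵥ s t) + s t ⬝ᵥ (H' t *ᵥ s t + H t *ᵥ s' t))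
      + (1:ℝ)/2 * (ahat' t ⬝ᵥ (Γ⁻¹ *ᵥ (ahat t - a)) + (ahat t - a) ⬝ᵥ (Γ⁻¹ *ᵥ ahat' t))
      = -(s t ⬝ᵥ (K *ᵥ s t)) := by
    rw [swap1, dotProduct_add, key, swap2, hGinv]
    simp only [dotProduct_sub, dotProduct_neg]
    rw [hY]
    linarith
  rw [hD] at hV
  exact hV
end

section
/- Let q : ℝ → ℝ^d be twice differentiable and q* : ℝ → ℝ^d be twice differentiable, and define q̃ = q − q*, s = q̇̃ + Λq̃, v = q̇* − Λq̃, where Λ ∈ ℝ^{d×d} is positive definite. Let H : ℝ → ℝ^{d×d} be a differentiable matrix-valued curve with H(t) symmetric positive definite for all t, let C : ℝ → ℝ^{d×d}, g : ℝ → ℝ^d, y : ℝ → ℝᵖ be curves, let A ∈ ℝ^{d×p} be fixed, and let Â : ℝ → ℝ^{d×p} be differentiable. Let K ∈ ℝ^{d×d} be positive definite and Γ ∈ ℝ^{d×d} be symmetric positive definite. Assume that for all t: (i) Ḣ(t) − 2C(t) is skew-symmetric; (ii) H(t)q̈(t) + C(t)q̇(t) + g(t) = τ(t) + A y(t) with the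 generalized force τ(t) = H(t)v̇(t) + C(t)v(t) + g(t) − K s(t) − Â(t) y(t); and (iii) Â̇(t) = Γ s(t) y(t)ᵀ. Then for all t, d/dt [ ½ s(t)ᵀ H(t) s(t) + ½ tr((Â(t) − A)ᵀ Γ⁻¹ (Â(t) − A)) ] = − s(t)ᵀ K s(t). -/
open Matrix


lemma hasDerivAt_dot_mulVec {d : ℕ} (a b : ℝ → Fin d → ℝ) (a' b' : Fin d → ℝ)
    (M : ℝ → Matrix (Fin d) (Fin d) ℝ) (M' : Matrix (Fin d) (Fin d) ℝ) (t : ℝ)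
    (ha : ∀ i, HasDerivAt (fun τ => a τ i) (a' i) t)
    (hb : ∀ i, HasDerivAt (fun τ => b τ i) (b' i) t)
    (hM : ∀ i j, HasDerivAt (fun τ => M τ i j) (M' i j) t) :
    HasDerivAt (fun τ => a τ ⬝ᵥ (M τ *ᵥ b τ))
      (a' ⬝ᵥ (M t *ᵥ b t) + a t ⬝ᵥ (M' *ᵥ b t) + a t ⬝ᵥ (M t *ᵥ b')) t := by
  have key : (fun τ => a τ ⬝ᵥ (M τ *ᵥ b τ))
      = fun τ => ∑ i, ∑ j, a τ i * (M τ i j * b τ j) := by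
    funext τ; simp [dotProduct, mulVec, Finset.mul_sum]
  rw [key]
  have hsum : HasDerivAt (fun τ => ∑ i, ∑ j, a τ i * (M τ i j * b τ j))
      (∑ i, ∑ j, (a' i * (M t i j * b t j)
        + a t i * (M' i j * b t j + M t i j * b' j))) t := by
    refine HasDerivAt.fun_sum fun i _ => HasDerivAt.fun_sum fun j _ => ?_
    exact (ha i).mul ((hM i j).mul (hb j))
  convert hsum using 1
  simp only [dotProduct, mulVec, Finset.mul_sum, ← Finset.sum_add_distrib]
  refine Finset.sum_congr rfl fun i _ => ?_
  refine Finset.sum_congr rfl fun j _ => ?_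
  ring

lemma trace_form_eq {d p : ℕ} (N : Matrix (Fin d) (Fin d) ℝ)
    (P Q : Matrix (Fin d) (Fin p) ℝ) :
    Matrix.trace (Pᵀ * N * Q) = ∑ j, ∑ k, ∑ i, P i j * N i k * Q k j := by
  simp [Matrix.trace, Matrix.diag, Matrix.mul_apply, Finset.sum_mul]

lemma hasDerivAt_trace_form {d p : ℕ} (N : Matrix (Fin d) (Fin d) ℝ)
    (A : Matrix (Fin d) (Fin p) ℝ) (Ahat : ℝ → Matrix (Fin d) (Fin p) ℝ)
    (Ahat' : Matrix (Fin d) (Fin p) ℝ) (t : ℝ)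
    (h : ∀ i j, HasDerivAt (fun τ => Ahat τ i j) (Ahat' i j) t) :
    HasDerivAt (fun τ => Matrix.trace ((Ahat τ - A)ᵀ * N * (Ahat τ - A)))
      (Matrix.trace (Ahat'ᵀ * N * (Ahat t - A))
        + Matrix.trace ((Ahat t - A)ᵀ * N * Ahat')) t := by
  have key : (fun τ => Matrix.trace ((Ahat τ - A)ᵀ * N * (Ahat τ - A)))
      = fun τ => ∑ j, ∑ k, ∑ i, (Ahat τ i j - A i j) * N i k * (Ahat τ k j - A k j) := by
    funext τ; rw [trace_form_eq]; simp
  rw [key]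
  have hsum : HasDerivAt
      (fun τ => ∑ j, ∑ k, ∑ i, (Ahat τ i j - A i j) * N i k * (Ahat τ k j - A k j))
      (∑ j, ∑ k, ∑ i, (Ahat' i j * N i k * (Ahat t k j - A k j)
        + (Ahat t i j - A i j) * N i k * Ahat' k j)) t := by
    refine HasDerivAt.fun_sum fun j _ => HasDerivAt.fun_sum fun k _ => HasDerivAt.fun_sum fun i _ => ?_
    have := (((h i j).sub_const (A i j)).mul_const (N i k)).fun_mul ((h k j).sub_const (A k j))
    simpa using this
  convert hsum using 1
  rw [trace_form_eq, trace_form_eq, ← Finset.sum_add_distrib]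
  refine Finset.sum_congr rfl fun j _ => ?_
  rw [← Finset.sum_add_distrib]
  refine Finset.sum_congr rfl fun k _ => ?_
  rw [← Finset.sum_add_distrib]
  refine Finset.sum_congr rfl fun i _ => ?_
  simp [Matrix.sub_apply]

lemma trace_transpose_vecMulVec {d p : ℕ} (P : Matrix (Fin d) (Fin p) ℝ)
    (u : Fin d → ℝ) (w : Fin p → ℝ) :
    Matrix.trace (Pᵀ * vecMulVec u w) = u ⬝ᵥ (P *ᵥ w) := by
  simp only [Matrix.trace, Matrix.diag, Matrix.mul_apply, Matrix.transpose_apply,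
    vecMulVec_apply, dotProduct, mulVec, Finset.mul_sum]
  rw [Finset.sum_comm]
  refine Finset.sum_congr rfl fun i _ => Finset.sum_congr rfl fun j _ => by ring

lemma mul_vecMulVec' {d p : ℕ} (Γ : Matrix (Fin d) (Fin d) ℝ) (u : Fin d → ℝ) (w : Fin p → ℝ) :
    vecMulVec (Γ *ᵥ u) w = Γ * vecMulVec u w := by
  ext i j
  simp [vecMulVec_apply, Matrix.mul_apply, mulVec, dotProduct, Finset.sum_mul, mul_assoc]

/-- Parametric-features adaptive control of a fully-actuated
Lagrangian system with external force `f_ext = A y`: the Lyapunov candidate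
`V = ½ sᵀHs + ½‖Â − A‖²_{Γ⁻¹}` (squared weighted trace norm) satisfies
`V̇ = −sᵀKs`. -/
theorem slotine_li_features_lyapunov_rate
    {d p : ℕ}
    -- twice-differentiable trajectory `q` and target `q*`:
    (q qs q' qs' q'' qs'' : ℝ → Fin d → ℝ)
    (hq : ∀ t, HasDerivAt q (q' t) t) (hq' : ∀ t, HasDerivAt q' (q'' t) t)
    (hqs : ∀ t, HasDerivAt qs (qs' t) t) (hqs' : ∀ t, HasDerivAt qs' (qs'' t) t)
    -- gains:
    (Λ K : Matrix (Fin d) (Fin d) ℝ) (hΛ : Λ.PosDef) (hK : K.PosDef)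
    (Γ : Matrix (Fin d) (Fin d) ℝ) (hΓ : Γ.PosDef)
    -- auxiliary variables `q̃ = q − q*`, `s = q̇̃ + Λq̃`, `v = q̇* − Λq̃` and
    -- their derivatives:
    (qt s v v' : ℝ → Fin d → ℝ)
    (hqt : ∀ t, qt t = q t - qs t)
    (hs : ∀ t, s t = (q' t - qs' t) + Λ *ᵥ qt t)
    (hv : ∀ t, v t = qs' t - Λ *ᵥ qt t)
    (hv' : ∀ t, v' t = qs'' t - Λ *ᵥ (q' t - qs' t))
    -- the dynamics terms evaluated along the trajectory, regarded as curves;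
    -- `H` is differentiable with derivative `H'` and pointwise symmetric
    -- positive definite:
    (H H' C : ℝ → Matrix (Fin d) (Fin d) ℝ)
    (hH : ∀ t i j, HasDerivAt (fun τ => H τ i j) (H' t i j) t)
    (hHpd : ∀ t, (H t).PosDef)
    (g : ℝ → Fin d → ℝ) (y : ℝ → Fin p → ℝ)
    (A : Matrix (Fin d) (Fin p) ℝ)
    (Ahat Ahat' : ℝ → Matrix (Fin d) (Fin p) ℝ)
    (hAhat : ∀ t i j, HasDerivAt (fun τ => Ahat τ i j) (Ahat' t i j) t)
    (τ : ℝ → Fin d → ℝ)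
    -- (i) `Ḣ − 2C` is skew-symmetric:
    (hskew : ∀ t, (H' t - (2 : ℝ) • C t)ᵀ = -(H' t - (2 : ℝ) • C t))
    -- (ii) equations of motion with external force `A y` and the commanded
    -- generalized force:
    (hτ : ∀ t, τ t = H t *ᵥ v' t + C t *ᵥ v t + g t - K *ᵥ s t - Ahat t *ᵥ y t)
    (hdyn : ∀ t, H t *ᵥ q'' t + C t *ᵥ q' t + g t = τ t + A *ᵥ y t)
    -- (iii) adaptation law `Â̇ = Γ s yᵀ`:
    (hadapt : ∀ t, Ahat' t = vecMulVec (Γ *ᵥ s t) (y t)) :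
    ∀ t, HasDerivAt
      (fun t => (1 / 2) * (s t ⬝ᵥ (H t *ᵥ s t))
        + (1 / 2) * Matrix.trace ((Ahat t - A)ᵀ * Γ⁻¹ * (Ahat t - A)))
      (-(s t ⬝ᵥ (K *ᵥ s t))) t := by
  intro t
  -- derivative of s
  set sd : ℝ → Fin d → ℝ := fun t => q'' t - qs'' t + Λ *ᵥ (q' t - qs' t) with hsd
  have hsc : ∀ i, HasDerivAt (fun τ => s τ i) (sd t i) t := by
    intro i
    have feq : (fun τ => s τ i)
        = fun τ => (q' τ i - qs' τ i) + ∑ k, Λ i k * (q τ k - qs τ k) := by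
      funext τ; rw [hs, hqt]; simp [mulVec, dotProduct]
    rw [feq]
    have h1 : HasDerivAt (fun τ => q' τ i - qs' τ i) (q'' t i - qs'' t i) t :=
      (hasDerivAt_pi.1 (hq' t) i).sub (hasDerivAt_pi.1 (hqs' t) i)
    have h2 : HasDerivAt (fun τ => ∑ k, Λ i k * (q τ k - qs τ k))
        (∑ k, Λ i k * (q' t k - qs' t k)) t := by
      refine HasDerivAt.fun_sum fun k _ => ?_
      exact ((hasDerivAt_pi.1 (hq t) k).sub (hasDerivAt_pi.1 (hqs t) k)).const_mul (Λ i k)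
    have := h1.fun_add h2
    simpa [hsd, mulVec, dotProduct] using this
  -- H symmetric
  have hHsymm : (H t)ᵀ = H t := by
    have := (hHpd t).1
    simpa [Matrix.IsHermitian] using this
  -- derivative of the first term
  have h1 : HasDerivAt (fun τ => s τ ⬝ᵥ (H τ *ᵥ s τ))
      (sd t ⬝ᵥ (H t *ᵥ s t) + s t ⬝ᵥ (H' t *ᵥ s t) + s t ⬝ᵥ (H t *ᵥ sd t)) t :=
    hasDerivAt_dot_mulVec s s (sd t) (sd t) H (H' t) t hsc hsc (hH t)
  -- derivative of the second term
  have h2 : HasDerivAt (fun τ => Matrix.trace ((Ahat τ - A)ᵀ * Γ⁻¹ * (Ahat τ - A)))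
      (Matrix.trace ((Ahat' t)ᵀ * Γ⁻¹ * (Ahat t - A))
        + Matrix.trace ((Ahat t - A)ᵀ * Γ⁻¹ * Ahat' t)) t :=
    hasDerivAt_trace_form Γ⁻¹ A Ahat (Ahat' t) t (hAhat t)
  have htot := (h1.const_mul ((1 : ℝ) / 2)).fun_add (h2.const_mul ((1 : ℝ) / 2))
  convert htot using 1
  · rfl
  · rfl
  -- now the algebraic identity
  -- key vector facts
  have hqv : q' t - v t = s t := by rw [hv t, hs t]; abel
  have hsdv : sd t = q'' t - v' t := by rw [hv' t, hsd]; abel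
  have hHs' : H t *ᵥ sd t = -(C t *ᵥ s t) - K *ᵥ s t + (A - Ahat t) *ᵥ y t := by
    have h2' : H t *ᵥ q'' t = τ t + A *ᵥ y t - C t *ᵥ q' t - g t := by
      rw [← hdyn t]; abel
    have hc : C t *ᵥ s t = C t *ᵥ q' t - C t *ᵥ v t := by
      rw [← hqv, mulVec_sub]
    rw [hsdv, mulVec_sub, h2', hτ t, hc, Matrix.sub_mulVec]
    abel
  -- symmetry of H
  have e1 : sd t ⬝ᵥ (H t *ᵥ s t) = s t ⬝ᵥ (H t *ᵥ sd t) := by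
    rw [Matrix.dotProduct_mulVec, ← Matrix.mulVec_transpose, hHsymm, dotProduct_comm]
  -- skew symmetry gives s ⬝ᵥ H' s = 2 s ⬝ᵥ C s
  have e2 : s t ⬝ᵥ (H' t *ᵥ s t) = 2 * (s t ⬝ᵥ (C t *ᵥ s t)) := by
    have hz : s t ⬝ᵥ ((H' t - (2 : ℝ) • C t) *ᵥ s t) = 0 := by
      have h1' : s t ⬝ᵥ ((H' t - (2 : ℝ) • C t) *ᵥ s t)
          = -(s t ⬝ᵥ ((H' t - (2 : ℝ) • C t) *ᵥ s t)) := by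
        conv_lhs => rw [Matrix.dotProduct_mulVec, ← Matrix.mulVec_transpose, hskew t,
          Matrix.neg_mulVec, neg_dotProduct, dotProduct_comm]
      linarith
    rw [Matrix.sub_mulVec, dotProduct_sub, Matrix.smul_mulVec, dotProduct_smul] at hz
    simp only [smul_eq_mul] at hz
    linarith
  have e3 : s t ⬝ᵥ (H t *ᵥ sd t)
      = -(s t ⬝ᵥ (C t *ᵥ s t)) - s t ⬝ᵥ (K *ᵥ s t) + s t ⬝ᵥ ((A - Ahat t) *ᵥ y t) := by
    rw [hHs']
    simp [dotProduct_add, dotProduct_sub, dotProduct_neg]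
  -- trace facts
  have hNs : (Γ⁻¹)ᵀ = Γ⁻¹ := by
    rw [Matrix.transpose_nonsing_inv]
    congr 1
    simpa [Matrix.IsHermitian] using hΓ.1
  have hΓinv : Γ⁻¹ * Γ = 1 :=
    Matrix.nonsing_inv_mul Γ (isUnit_iff_ne_zero.2 hΓ.det_pos.ne')
  have tB : Matrix.trace ((Ahat t - A)ᵀ * Γ⁻¹ * Ahat' t)
      = s t ⬝ᵥ ((Ahat t - A) *ᵥ y t) := by
    rw [hadapt t, mul_vecMulVec', Matrix.mul_assoc, ← Matrix.mul_assoc Γ⁻¹, hΓinv,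
      Matrix.one_mul, trace_transpose_vecMulVec]
  have tA : Matrix.trace ((Ahat' t)ᵀ * Γ⁻¹ * (Ahat t - A))
      = s t ⬝ᵥ ((Ahat t - A) *ᵥ y t) := by
    rw [← Matrix.trace_transpose, Matrix.transpose_mul, Matrix.transpose_mul,
      Matrix.transpose_transpose, hNs, ← Matrix.mul_assoc]
    exact tB
  have e5 : s t ⬝ᵥ ((A - Ahat t) *ᵥ y t) = -(s t ⬝ᵥ ((Ahat t - A) *ᵥ y t)) := by
    rw [show A - Ahat t = -(Ahat t - A) by abel, Matrix.neg_mulVec, dotProduct_neg]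
  rw [e1, e2, e3, e5, tA, tB]
  ring
end
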